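/- For a prime p ≥ 3 and m ≥ 1, the map sending A ∈ K_m to A^p induces a group isomorphism from the quotient K_m/K_{m+1} onto K_{m+1}/K_{m+2}, where K_j is the j-th principal congruence subgroup of GL_n(ℤ_p). Moreover each quotient K_m/K_{m+1} is isomorphic (as a group) to the additive group of n×n matrices over 𝔽_p. -/
import Mathlib


open Matrix

/-- The `j`-th principal congruence subgroup of `GL d ℤ_[p]`. -/
def congrSubgroup (p : ℕ) [Fact p.Prime] (d j : ℕ) : Subgroup (GL (Fin d) ℤ_[p]) where
  carrier := {M | ∀ i k, (p : ℤ_[p]) ^ j ∣ ((M : Matrix (Fin d) (Fin d) ℤ_[p]) - 1) i k}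
  one_mem' := by
    intro i k
    simp
  mul_mem' := by
    intro A B hA hB i k
    have key : ((A * B : GL (Fin d) ℤ_[p]) : Matrix (Fin d) (Fin d) ℤ_[p]) - 1
        = ((A : Matrix (Fin d) (Fin d) ℤ_[p]) - 1) * (B : Matrix (Fin d) (Fin d) ℤ_[p])
          + ((B : Matrix (Fin d) (Fin d) ℤ_[p]) - 1) := by
      rw [Units.val_mul]
      noncomm_ring
    rw [key, Matrix.add_apply, Matrix.mul_apply]
    exact dvd_add (Finset.dvd_sum fun l _ => (hA i l).mul_right _) (hB i k)
  inv_mem' := by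
    intro A hA i k
    have h1 : ((A⁻¹ : GL (Fin d) ℤ_[p]) : Matrix (Fin d) (Fin d) ℤ_[p])
        * (A : Matrix (Fin d) (Fin d) ℤ_[p]) = 1 := by
      rw [← Units.val_mul, inv_mul_cancel, Units.val_one]
    have key : ((A⁻¹ : GL (Fin d) ℤ_[p]) : Matrix (Fin d) (Fin d) ℤ_[p]) - 1
        = ((A⁻¹ : GL (Fin d) ℤ_[p]) : Matrix (Fin d) (Fin d) ℤ_[p])
          * ((1 : Matrix (Fin d) (Fin d) ℤ_[p]) - (A : Matrix (Fin d) (Fin d) ℤ_[p])) := by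
      rw [Matrix.mul_sub, Matrix.mul_one, h1]
    rw [key, Matrix.mul_apply]
    refine Finset.dvd_sum fun l _ => Dvd.dvd.mul_left ?_ _
    have : ((1 : Matrix (Fin d) (Fin d) ℤ_[p]) - (A : Matrix (Fin d) (Fin d) ℤ_[p])) l k
        = -(((A : Matrix (Fin d) (Fin d) ℤ_[p]) - 1) l k) := by
      simp [Matrix.sub_apply]
    rw [this]
    exact (hA l k).neg_right

instance congrSubgroup_normal (p : ℕ) [Fact p.Prime] (d j : ℕ) :
    (congrSubgroup p d j).Normal := by
  constructor
  intro M hM g i k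
  have hgg : (g : Matrix (Fin d) (Fin d) ℤ_[p]) * ((g⁻¹ : GL (Fin d) ℤ_[p]) : Matrix (Fin d) (Fin d) ℤ_[p]) = 1 := by
    rw [← Units.val_mul, mul_inv_cancel, Units.val_one]
  have key : ((g * M * g⁻¹ : GL (Fin d) ℤ_[p]) : Matrix (Fin d) (Fin d) ℤ_[p]) - 1
      = (g : Matrix (Fin d) (Fin d) ℤ_[p]) * (((M : Matrix (Fin d) (Fin d) ℤ_[p]) - 1))
        * ((g⁻¹ : GL (Fin d) ℤ_[p]) : Matrix (Fin d) (Fin d) ℤ_[p]) := by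
    rw [Units.val_mul, Units.val_mul, Matrix.mul_sub, Matrix.mul_one, Matrix.sub_mul, hgg]
  rw [key, Matrix.mul_apply]
  refine Finset.dvd_sum fun l _ => Dvd.dvd.mul_right ?_ _
  rw [Matrix.mul_apply]
  exact Finset.dvd_sum fun m _ => (hM m l).mul_left _

section Aux

variable (p : ℕ) [Fact p.Prime] (n : ℕ)

lemma toZMod_eq_zero_iff_aux {x : ℤ_[p]} :
    PadicInt.toZMod x = 0 ↔ (p : ℤ_[p]) ∣ x := by
  rw [← RingHom.mem_ker, PadicInt.ker_toZMod, PadicInt.maximalIdeal_eq_span_p,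
    Ideal.mem_span_singleton]

/-- The matrix `X` with `M = 1 + p^m X`. -/
noncomputable def entryX {m : ℕ} (M : congrSubgroup p n m) : Matrix (Fin n) (Fin n) ℤ_[p] :=
  fun i k => (M.2 i k).choose

lemma entryX_spec {m : ℕ} (M : congrSubgroup p n m) :
    ((M : GL (Fin n) ℤ_[p]) : Matrix (Fin n) (Fin n) ℤ_[p]) - 1
      = (p : ℤ_[p]) ^ m • entryX p n M := by
  ext i k
  simpa [entryX] using (M.2 i k).choose_spec

lemma entryX_unique {m : ℕ} (M : congrSubgroup p n m) (X : Matrix (Fin n) (Fin n) ℤ_[p])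
    (h : ((M : GL (Fin n) ℤ_[p]) : Matrix (Fin n) (Fin n) ℤ_[p]) - 1 = (p : ℤ_[p]) ^ m • X) :
    entryX p n M = X := by
  have h2 := (entryX_spec p n M).symm.trans h
  ext i k
  have h3 : (p : ℤ_[p]) ^ m * entryX p n M i k = (p : ℤ_[p]) ^ m * X i k := by
    simpa using congrFun (congrFun h2 i) k
  exact mul_left_cancel₀ (pow_ne_zero _ (Nat.cast_ne_zero.mpr (Fact.out : p.Prime).ne_zero)) h3

/-- The reduction map `K_m → M_n(𝔽_p)`, `1 + p^m X ↦ X mod p`. -/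
noncomputable def redMap (m : ℕ) (hm : 1 ≤ m) :
    congrSubgroup p n m →* Multiplicative (Matrix (Fin n) (Fin n) (ZMod p)) where
  toFun M := Multiplicative.ofAdd ((entryX p n M).map (PadicInt.toZMod))
  map_one' := by
    have h : entryX p n (1 : congrSubgroup p n m) = 0 :=
      entryX_unique p n 1 0 (by simp)
    show Multiplicative.ofAdd ((entryX p n (1 : congrSubgroup p n m)).map (PadicInt.toZMod)) = 1
    rw [h, Matrix.map_zero _ (map_zero _), ofAdd_zero]
  map_mul' := by
    intro M N
    have key : entryX p n (M * N)
        = (p : ℤ_[p]) ^ m • (entryX p n M * entryX p n N) + entryX p n M + entryX p n N := by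
      apply entryX_unique
      have hM := entryX_spec p n M
      have hN := entryX_spec p n N
      have hM' : ((M : GL (Fin n) ℤ_[p]) : Matrix (Fin n) (Fin n) ℤ_[p])
          = 1 + (p : ℤ_[p]) ^ m • entryX p n M := by rw [← hM]; abel
      have hN' : ((N : GL (Fin n) ℤ_[p]) : Matrix (Fin n) (Fin n) ℤ_[p])
          = 1 + (p : ℤ_[p]) ^ m • entryX p n N := by rw [← hN]; abel
      have hmul : (((M * N : congrSubgroup p n m) : GL (Fin n) ℤ_[p])
            : Matrix (Fin n) (Fin n) ℤ_[p])
          = ((M : GL (Fin n) ℤ_[p]) : Matrix (Fin n) (Fin n) ℤ_[p])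
            * ((N : GL (Fin n) ℤ_[p]) : Matrix (Fin n) (Fin n) ℤ_[p]) := rfl
      rw [hmul, hM', hN']
      simp only [mul_add, add_mul, one_mul, mul_one, smul_add, smul_mul_assoc, mul_smul_comm,
        smul_smul, ← pow_add]
      abel
    show Multiplicative.ofAdd _ = Multiplicative.ofAdd _ * Multiplicative.ofAdd _
    rw [← ofAdd_add]
    congr 1
    rw [key]
    ext i k
    have hp0 : PadicInt.toZMod ((p : ℤ_[p]) ^ m * (entryX p n M * entryX p n N) i k) = 0 := by
      rw [_root_.map_mul, map_pow, map_natCast, ZMod.natCast_self, zero_pow (by omega), zero_mul]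
    simp [Matrix.map_apply, Matrix.add_apply, Matrix.smul_apply, smul_eq_mul, map_add, hp0]

lemma ker_redMap (m : ℕ) (hm : 1 ≤ m) :
    (redMap p n m hm).ker = (congrSubgroup p n (m + 1)).subgroupOf (congrSubgroup p n m) := by
  have hpne : (p : ℤ_[p]) ^ m ≠ 0 :=
    pow_ne_zero _ (Nat.cast_ne_zero.mpr (Fact.out : p.Prime).ne_zero)
  ext M
  rw [MonoidHom.mem_ker, Subgroup.mem_subgroupOf]
  constructor
  · intro h i k
    have h0 : (entryX p n M).map (PadicInt.toZMod) = 0 := h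
    have h1 : PadicInt.toZMod (entryX p n M i k) = 0 := by
      simpa [Matrix.map_apply] using congrFun (congrFun h0 i) k
    obtain ⟨c, hc⟩ := (toZMod_eq_zero_iff_aux p).mp h1
    have h2 : (((M : GL (Fin n) ℤ_[p]) : Matrix (Fin n) (Fin n) ℤ_[p]) - 1) i k
        = (p : ℤ_[p]) ^ m * entryX p n M i k := by
      simpa using congrFun (congrFun (entryX_spec p n M) i) k
    rw [h2, hc]
    exact ⟨c, by ring⟩
  · intro h
    show Multiplicative.ofAdd ((entryX p n M).map (PadicInt.toZMod)) = 1
    have : (entryX p n M).map (PadicInt.toZMod) = 0 := by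
      ext i k
      obtain ⟨c, hc⟩ := h i k
      have h2 : (((M : GL (Fin n) ℤ_[p]) : Matrix (Fin n) (Fin n) ℤ_[p]) - 1) i k
          = (p : ℤ_[p]) ^ m * entryX p n M i k := by
        simpa using congrFun (congrFun (entryX_spec p n M) i) k
      have h3 : (p : ℤ_[p]) ^ m * entryX p n M i k = (p : ℤ_[p]) ^ m * ((p : ℤ_[p]) * c) := by
        rw [← h2, hc]; ring
      have h4 : entryX p n M i k = (p : ℤ_[p]) * c := mul_left_cancel₀ hpne h3
      simp [Matrix.map_apply, h4, (toZMod_eq_zero_iff_aux p).mpr ⟨c, rfl⟩]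
    rw [this]
    rfl

lemma redMap_surjective (m : ℕ) (hm : 1 ≤ m) :
    Function.Surjective (redMap p n m hm) := by
  intro Y
  set Y' : Matrix (Fin n) (Fin n) ℤ_[p] :=
    (Multiplicative.toAdd Y).map (fun y => ((y.val : ℕ) : ℤ_[p])) with hY'
  set M₀ : Matrix (Fin n) (Fin n) ℤ_[p] := 1 + (p : ℤ_[p]) ^ m • Y' with hM₀
  have hred : M₀.map (PadicInt.toZMod) = 1 := by
    ext i k
    have hp0 : ∀ a b, PadicInt.toZMod ((p : ℤ_[p]) ^ m * Y' a b) = 0 := by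
      intro a b
      rw [_root_.map_mul, map_pow, map_natCast, ZMod.natCast_self, zero_pow (by omega), zero_mul]
    by_cases h : i = k <;>
      simp [hM₀, Matrix.map_apply, Matrix.add_apply, Matrix.one_apply, Matrix.smul_apply,
        smul_eq_mul, h, hp0]
  have hdet : PadicInt.toZMod M₀.det = 1 := by
    rw [RingHom.map_det, RingHom.mapMatrix_apply, hred, Matrix.det_one]
  have hunit : IsUnit M₀ := by
    rw [Matrix.isUnit_iff_isUnit_det]
    by_contra hc
    have h1 : ‖M₀.det‖ < 1 := PadicInt.not_isUnit_iff.mp hc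
    have h2 : (p : ℤ_[p]) ∣ M₀.det := (PadicInt.norm_lt_one_iff_dvd _).mp h1
    rw [(toZMod_eq_zero_iff_aux p).mpr h2] at hdet
    exact zero_ne_one hdet
  obtain ⟨u, hu⟩ := hunit
  have hmem : (u : GL (Fin n) ℤ_[p]) ∈ congrSubgroup p n m := by
    intro i k
    have : ((u : Matrix (Fin n) (Fin n) ℤ_[p]) - 1) i k = (p : ℤ_[p]) ^ m * Y' i k := by
      rw [hu]; simp [hM₀]
    rw [this]
    exact ⟨Y' i k, rfl⟩
  refine ⟨⟨u, hmem⟩, ?_⟩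
  have hX : entryX p n (⟨u, hmem⟩ : congrSubgroup p n m) = Y' := by
    apply entryX_unique
    show (u : Matrix (Fin n) (Fin n) ℤ_[p]) - 1 = _
    rw [hu, hM₀]; abel
  show Multiplicative.ofAdd _ = Y
  rw [hX]
  have : Y'.map (PadicInt.toZMod) = Multiplicative.toAdd Y := by
    ext i k
    simp [hY', Matrix.map_apply, map_natCast, ZMod.natCast_val, ZMod.cast_id]
  rw [this]; rfl

/-- The isomorphism `K_m/K_{m+1} ≃* M_n(𝔽_p)`. -/
noncomputable def quotIso (m : ℕ) (hm : 1 ≤ m) :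
    (congrSubgroup p n m ⧸ (congrSubgroup p n (m + 1)).subgroupOf (congrSubgroup p n m)) ≃*
      Multiplicative (Matrix (Fin n) (Fin n) (ZMod p)) :=
  (QuotientGroup.quotientMulEquivOfEq (ker_redMap p n m hm).symm).trans
    (QuotientGroup.quotientKerEquivOfSurjective _ (redMap_surjective p n m hm))

lemma quotIso_mk (m : ℕ) (hm : 1 ≤ m) (A : congrSubgroup p n m) :
    quotIso p n m hm (QuotientGroup.mk A) = redMap p n m hm A := rfl

lemma pow_p_key (m : ℕ) (hp : 3 ≤ p) (hm : 1 ≤ m) (A : congrSubgroup p n m) (i j : Fin n) :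
    (p : ℤ_[p]) ^ (m + 2) ∣
      ((((A : GL (Fin n) ℤ_[p]) : Matrix (Fin n) (Fin n) ℤ_[p])) ^ p - 1
        - (p : ℤ_[p]) ^ (m + 1) • entryX p n A) i j := by
  set X := entryX p n A with hX
  set P : Matrix (Fin n) (Fin n) ℤ_[p] := (p : ℤ_[p]) ^ m • X with hP
  have hA : ((A : GL (Fin n) ℤ_[p]) : Matrix (Fin n) (Fin n) ℤ_[p]) = P + 1 := by
    rw [hP, hX, ← entryX_spec p n A]; abel
  have hcomm : Commute P (1 : Matrix (Fin n) (Fin n) ℤ_[p]) := Commute.one_right P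
  rw [hA, hcomm.add_pow]
  rw [Finset.range_eq_Ico,
    Finset.sum_eq_sum_Ico_succ_bot (by omega : 0 < p + 1),
    Finset.sum_eq_sum_Ico_succ_bot (by omega : 0 + 1 < p + 1)]
  have hf0 : P ^ 0 * 1 ^ (p - 0) * (p.choose 0 : Matrix (Fin n) (Fin n) ℤ_[p]) = 1 := by
    simp
  have hf1 : P ^ (0 + 1) * 1 ^ (p - (0 + 1)) * (p.choose (0 + 1) : Matrix (Fin n) (Fin n) ℤ_[p])
      = (p : ℤ_[p]) ^ (m + 1) • X := by
    rw [Nat.choose_one_right]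
    have hcast : ((p : ℕ) : Matrix (Fin n) (Fin n) ℤ_[p]) = (p : ℤ_[p]) • 1 := by
      rw [Matrix.smul_one_eq_diagonal, ← Matrix.diagonal_natCast]
    rw [hcast]
    simp only [zero_add, pow_one, one_pow, mul_one, mul_smul_comm, smul_smul]
    rw [hP, smul_smul, mul_comm, ← pow_succ]
  rw [hf0, hf1]
  have hsum : (1 + ((p : ℤ_[p]) ^ (m + 1) • X
        + ∑ k ∈ Finset.Ico (0 + 1 + 1) (p + 1),
            P ^ k * 1 ^ (p - k) * (p.choose k : Matrix (Fin n) (Fin n) ℤ_[p]))) - 1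
        - (p : ℤ_[p]) ^ (m + 1) • X
      = ∑ k ∈ Finset.Ico (0 + 1 + 1) (p + 1),
          P ^ k * 1 ^ (p - k) * (p.choose k : Matrix (Fin n) (Fin n) ℤ_[p]) := by
    abel
  rw [hsum, Matrix.sum_apply]
  refine Finset.dvd_sum ?_
  intro k hk
  rw [Finset.mem_Ico] at hk
  obtain ⟨hk2, hkp⟩ := hk
  have hPk : P ^ k = (p : ℤ_[p]) ^ (m * k) • X ^ k := by
    rw [hP, smul_pow, ← pow_mul]
  have hcast : ((p.choose k : ℕ) : Matrix (Fin n) (Fin n) ℤ_[p])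
      = ((p.choose k : ℤ_[p])) • 1 := by
    rw [Matrix.smul_one_eq_diagonal, ← Matrix.diagonal_natCast]
  rw [hPk, hcast, one_pow, mul_one, smul_mul_assoc, mul_smul_comm, smul_smul, mul_one]
  rw [Matrix.smul_apply, smul_eq_mul]
  refine Dvd.dvd.mul_right ?_ _
  rcases eq_or_lt_of_le (Nat.lt_succ_iff.mp hkp) with hkeq | hklt
  · -- k = p
    refine Dvd.dvd.mul_right ?_ _
    apply pow_dvd_pow
    subst hkeq
    nlinarith
  · -- 2 ≤ k < p : p ∣ choose, and p^(m+1) ∣ p^(mk)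
    obtain ⟨c, hc⟩ := (Fact.out : p.Prime).dvd_choose_self (by omega) hklt
    have h1 : ((p.choose k : ℕ) : ℤ_[p]) = (p : ℤ_[p]) * c := by
      rw [hc]; push_cast; ring
    have h2 : (p : ℤ_[p]) ^ (m + 1) ∣ (p : ℤ_[p]) ^ (m * k) :=
      pow_dvd_pow _ (by nlinarith)
    obtain ⟨d, hd⟩ := h2
    refine ⟨d * c, ?_⟩
    rw [h1, hd]
    ring

lemma redMap_pow (m : ℕ) (hp : 3 ≤ p) (hm : 1 ≤ m)
    (A : congrSubgroup p n m) (B : congrSubgroup p n (m + 1))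
    (hB : (B : GL (Fin n) ℤ_[p]) = (A : GL (Fin n) ℤ_[p]) ^ p) :
    (entryX p n B).map (PadicInt.toZMod) = (entryX p n A).map (PadicInt.toZMod) := by
  have hpne : (p : ℤ_[p]) ^ (m + 1) ≠ 0 :=
    pow_ne_zero _ (Nat.cast_ne_zero.mpr (Fact.out : p.Prime).ne_zero)
  ext i k
  obtain ⟨c, hc⟩ := pow_p_key p n m hp hm A i k
  have hBmat : ((B : GL (Fin n) ℤ_[p]) : Matrix (Fin n) (Fin n) ℤ_[p])
      = ((A : GL (Fin n) ℤ_[p]) : Matrix (Fin n) (Fin n) ℤ_[p]) ^ p := by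
    rw [hB]; rfl
  have hspec : (p : ℤ_[p]) ^ (m + 1) * entryX p n B i k
      = ((((A : GL (Fin n) ℤ_[p]) : Matrix (Fin n) (Fin n) ℤ_[p])) ^ p - 1) i k := by
    have := congrFun (congrFun (entryX_spec p n B) i) k
    simp only [Matrix.sub_apply, Matrix.smul_apply, smul_eq_mul] at this
    rw [← this, hBmat]
    simp [Matrix.sub_apply]
  have hc' : ((((A : GL (Fin n) ℤ_[p]) : Matrix (Fin n) (Fin n) ℤ_[p])) ^ p - 1) i k
      = (p : ℤ_[p]) ^ (m + 1) * entryX p n A i k + (p : ℤ_[p]) ^ (m + 2) * c := by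
    have h := hc
    simp only [Matrix.sub_apply, Matrix.smul_apply, smul_eq_mul] at h ⊢
    linear_combination h
  have hkey : (p : ℤ_[p]) ^ (m + 1) * entryX p n B i k
      = (p : ℤ_[p]) ^ (m + 1) * (entryX p n A i k + (p : ℤ_[p]) * c) := by
    rw [hspec, hc']; ring
  have h4 : entryX p n B i k = entryX p n A i k + (p : ℤ_[p]) * c :=
    mul_left_cancel₀ hpne hkey
  have hp0 : PadicInt.toZMod ((p : ℤ_[p]) * c) = 0 :=
    (toZMod_eq_zero_iff_aux p).mpr ⟨c, rfl⟩
  simp [Matrix.map_apply, h4, map_add, hp0]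

end Aux

/-- For a prime `p ≥ 3` and `m ≥ 1`, the `p`-th power map induces a group
isomorphism `K_m/K_{m+1} ≃ K_{m+1}/K_{m+2}` of quotients of principal congruence subgroups of
`GL_n(ℤ_p)`; moreover each quotient `K_m/K_{m+1}` is isomorphic, as a group, to the additive
group of `n × n` matrices over `𝔽_p`. -/
theorem pth_power_quotient_iso (p : ℕ) [Fact p.Prime] (hp : 3 ≤ p) (n m : ℕ) (hm : 1 ≤ m) :
    (∃ e : (congrSubgroup p n m ⧸ (congrSubgroup p n (m + 1)).subgroupOf (congrSubgroup p n m)) ≃*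
        (congrSubgroup p n (m + 1) ⧸ (congrSubgroup p n (m + 2)).subgroupOf (congrSubgroup p n (m + 1))),
      ∀ (A : congrSubgroup p n m) (B : congrSubgroup p n (m + 1)),
        (B : GL (Fin n) ℤ_[p]) = (A : GL (Fin n) ℤ_[p]) ^ p →
          e (QuotientGroup.mk A) = QuotientGroup.mk B) ∧
    Nonempty ((congrSubgroup p n m ⧸ (congrSubgroup p n (m + 1)).subgroupOf (congrSubgroup p n m)) ≃*
      Multiplicative (Matrix (Fin n) (Fin n) (ZMod p))) := by
  refine ⟨⟨(quotIso p n m hm).trans (quotIso p n (m + 1) (by omega)).symm, ?_⟩,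
    ⟨quotIso p n m hm⟩⟩
  intro A B hAB
  rw [MulEquiv.trans_apply, quotIso_mk, MulEquiv.symm_apply_eq, quotIso_mk]
  show Multiplicative.ofAdd _ = Multiplicative.ofAdd _
  exact congrArg Multiplicative.ofAdd (redMap_pow p n m hp hm A B hAB).symm
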